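/- Let F be a field and a ∈ F with a ≠ 1 and a ≠ 2, set b = a, and let x, y be the 7×7 matrices of the dimension-7 setup. Then the seventh power of the commutator of x and y is not the identity: (x·y·x⁻¹·y⁻¹)⁷ ≠ I. (This is the computational content of the fact that ⟨x,y⟩ is not contained in a subgroup isomorphic to Sp₆(2), in which the commutator of an involution and an order-3 element generating the group has order 7.) -/

import Mathlib

open Matrix

@[simp] lemma my_cons_val_five {α : Type*} {m : ℕ} (x : α) (u : Fin (m+5) → α) :
    vecCons x u 5 = vecHead (vecTail (vecTail (vecTail (vecTail u)))) := rfl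

@[simp] lemma my_cons_val_six {α : Type*} {m : ℕ} (x : α) (u : Fin (m+6) → α) :
    vecCons x u 6 = vecHead (vecTail (vecTail (vecTail (vecTail (vecTail u))))) := rfl

set_option maxHeartbeats 2000000 in
/-- **The commutator `[x,y]` does not have order 7.** Let `F` be a field and `a ∈ F` with
`a ≠ 1` and `a ≠ 2`, with `b = a`, and let `x, y` be the matrices of the dimension-7
setup. Then `(x·y·x⁻¹·y⁻¹)⁷ ≠ 1`. (Hence `⟨x,y⟩` is not contained in a subgroup
isomorphic to `Sp_6(2)`.) -/
theorem dim7_commutator_seventh_power_ne_one (F : Type) [Field F] (a : F)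
    (ha1 : a ≠ 1) (ha2 : a ≠ 2) (x y : Matrix (Fin 7) (Fin 7) F)
    (hx : x = !![0,1,0,0,0,0,a; 1,0,0,0,0,0,a; 0,0,0,1,0,0,0; 0,0,1,0,0,0,0;
      0,0,0,0,0,1,-1; 0,0,0,0,1,0,-1; 0,0,0,0,0,0,-1])
    (hy : y = !![1,0,-1,0,-1,0,a+a-1; 0,0,-1,0,0,0,0; 0,1,-1,0,0,0,0; 0,0,0,0,-1,0,0;
      0,0,0,1,-1,0,0; 0,0,0,0,0,0,-1; 0,0,0,0,0,1,-1]) :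
    (x * y * x⁻¹ * y⁻¹) ^ 7 ≠ 1 := by
  have hx2 : x * x = 1 := by
    rw [hx]; ext i j
    fin_cases i <;> fin_cases j <;> simp [Matrix.mul_apply, Fin.sum_univ_seven, Matrix.one_apply]
  have hy3 : y * (y * y) = 1 := by
    rw [hy]; ext i j
    fin_cases i <;> fin_cases j <;> simp [Matrix.mul_apply, Fin.sum_univ_seven, Matrix.one_apply]
  have hxinv : x⁻¹ = x := Matrix.inv_eq_right_inv hx2
  have hyinv : y⁻¹ = y * y := Matrix.inv_eq_right_inv hy3
  have s0 : y *ᵥ ![0, 0, 0, 0, 1, 0, 0] = ![-1, 0, 0, -1, -1, 0, 0] := by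
    rw [hy]; funext i
    fin_cases i <;> simp [Matrix.mulVec, dotProduct, Fin.sum_univ_seven] <;> ring
  have s1 : y *ᵥ ![-1, 0, 0, -1, -1, 0, 0] = ![0, 0, 0, 1, 0, 0, 0] := by
    rw [hy]; funext i
    fin_cases i <;> simp [Matrix.mulVec, dotProduct, Fin.sum_univ_seven] <;> ring
  have s2 : x *ᵥ ![0, 0, 0, 1, 0, 0, 0] = ![0, 0, 1, 0, 0, 0, 0] := by
    rw [hx]; funext i
    fin_cases i <;> simp [Matrix.mulVec, dotProduct, Fin.sum_univ_seven] <;> ring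
  have s3 : y *ᵥ ![0, 0, 1, 0, 0, 0, 0] = ![-1, -1, -1, 0, 0, 0, 0] := by
    rw [hy]; funext i
    fin_cases i <;> simp [Matrix.mulVec, dotProduct, Fin.sum_univ_seven] <;> ring
  have s4 : x *ᵥ ![-1, -1, -1, 0, 0, 0, 0] = ![-1, -1, 0, -1, 0, 0, 0] := by
    rw [hx]; funext i
    fin_cases i <;> simp [Matrix.mulVec, dotProduct, Fin.sum_univ_seven] <;> ring
  have s5 : y *ᵥ ![-1, -1, 0, -1, 0, 0, 0] = ![-1, 0, -1, 0, -1, 0, 0] := by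
    rw [hy]; funext i
    fin_cases i <;> simp [Matrix.mulVec, dotProduct, Fin.sum_univ_seven] <;> ring
  have s6 : y *ᵥ ![-1, 0, -1, 0, -1, 0, 0] = ![1, 1, 1, 1, 1, 0, 0] := by
    rw [hy]; funext i
    fin_cases i <;> simp [Matrix.mulVec, dotProduct, Fin.sum_univ_seven] <;> ring
  have s7 : x *ᵥ ![1, 1, 1, 1, 1, 0, 0] = ![1, 1, 1, 1, 0, 1, 0] := by
    rw [hx]; funext i
    fin_cases i <;> simp [Matrix.mulVec, dotProduct, Fin.sum_univ_seven] <;> ring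
  have s8 : y *ᵥ ![1, 1, 1, 1, 0, 1, 0] = ![0, -1, 0, 0, 1, 0, 1] := by
    rw [hy]; funext i
    fin_cases i <;> simp [Matrix.mulVec, dotProduct, Fin.sum_univ_seven] <;> ring
  have s9 : x *ᵥ ![0, -1, 0, 0, 1, 0, 1] = ![(-1 + a), a, 0, 0, -1, 0, -1] := by
    rw [hx]; funext i
    fin_cases i <;> simp [Matrix.mulVec, dotProduct, Fin.sum_univ_seven] <;> ring
  have s10 : y *ᵥ ![(-1 + a), a, 0, 0, -1, 0, -1] = ![(1 - a), 0, a, 1, 1, 1, 1] := by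
    rw [hy]; funext i
    fin_cases i <;> simp [Matrix.mulVec, dotProduct, Fin.sum_univ_seven] <;> ring
  have s11 : y *ᵥ ![(1 - a), 0, a, 1, 1, 1, 1] = ![-1, -a, -a, -1, 0, -1, 0] := by
    rw [hy]; funext i
    fin_cases i <;> simp [Matrix.mulVec, dotProduct, Fin.sum_univ_seven] <;> ring
  have s12 : x *ᵥ ![-1, -a, -a, -1, 0, -1, 0] = ![-a, -1, -1, -a, -1, 0, 0] := by
    rw [hx]; funext i
    fin_cases i <;> simp [Matrix.mulVec, dotProduct, Fin.sum_univ_seven] <;> ring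
  have s13 : y *ᵥ ![-a, -1, -1, -a, -1, 0, 0] = ![(2 - a), 1, 0, 1, (1 - a), 0, 0] := by
    rw [hy]; funext i
    fin_cases i <;> simp [Matrix.mulVec, dotProduct, Fin.sum_univ_seven] <;> ring
  have s14 : x *ᵥ ![(2 - a), 1, 0, 1, (1 - a), 0, 0] = ![1, (2 - a), 1, 0, 0, (1 - a), 0] := by
    rw [hx]; funext i
    fin_cases i <;> simp [Matrix.mulVec, dotProduct, Fin.sum_univ_seven] <;> ring
  have s15 : y *ᵥ ![1, (2 - a), 1, 0, 0, (1 - a), 0] = ![0, -1, (1 - a), 0, 0, 0, (1 - a)] := by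
    rw [hy]; funext i
    fin_cases i <;> simp [Matrix.mulVec, dotProduct, Fin.sum_univ_seven] <;> ring
  have s16 : y *ᵥ ![0, -1, (1 - a), 0, 0, 0, (1 - a)] = ![(-2 + 4*a - 2*a^2), (-1 + a), (-2 + a), 0, 0, (-1 + a), (-1 + a)] := by
    rw [hy]; funext i
    fin_cases i <;> simp [Matrix.mulVec, dotProduct, Fin.sum_univ_seven] <;> ring
  have s17 : x *ᵥ ![(-2 + 4*a - 2*a^2), (-1 + a), (-2 + a), 0, 0, (-1 + a), (-1 + a)] = ![(-1 + a^2), (-2 + 3*a - a^2), 0, (-2 + a), 0, (1 - a), (1 - a)] := by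
    rw [hx]; funext i
    fin_cases i <;> simp [Matrix.mulVec, dotProduct, Fin.sum_univ_seven] <;> ring
  have s18 : y *ᵥ ![(-1 + a^2), (-2 + 3*a - a^2), 0, (-2 + a), 0, (1 - a), (1 - a)] = ![(-2 + 3*a - a^2), 0, (-2 + 3*a - a^2), 0, (-2 + a), (-1 + a), 0] := by
    rw [hy]; funext i
    fin_cases i <;> simp [Matrix.mulVec, dotProduct, Fin.sum_univ_seven] <;> ring
  have s19 : x *ᵥ ![(-2 + 3*a - a^2), 0, (-2 + 3*a - a^2), 0, (-2 + a), (-1 + a), 0] = ![0, (-2 + 3*a - a^2), 0, (-2 + 3*a - a^2), (-1 + a), (-2 + a), 0] := by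
    rw [hx]; funext i
    fin_cases i <;> simp [Matrix.mulVec, dotProduct, Fin.sum_univ_seven] <;> ring
  have s20 : y *ᵥ ![0, (-2 + 3*a - a^2), 0, (-2 + 3*a - a^2), (-1 + a), (-2 + a), 0] = ![(1 - a), 0, (-2 + 3*a - a^2), (1 - a), (-1 + 2*a - a^2), 0, (-2 + a)] := by
    rw [hy]; funext i
    fin_cases i <;> simp [Matrix.mulVec, dotProduct, Fin.sum_univ_seven] <;> ring
  have s21 : y *ᵥ ![(1 - a), 0, (-2 + 3*a - a^2), (1 - a), (-1 + 2*a - a^2), 0, (-2 + a)] = ![(6 - 11*a + 4*a^2), (2 - 3*a + a^2), (2 - 3*a + a^2), (1 - 2*a + a^2), (2 - 3*a + a^2), (2 - a), (2 - a)] := by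
    rw [hy]; funext i
    fin_cases i <;> simp [Matrix.mulVec, dotProduct, Fin.sum_univ_seven] <;> ring
  have s22 : x *ᵥ ![(6 - 11*a + 4*a^2), (2 - 3*a + a^2), (2 - 3*a + a^2), (1 - 2*a + a^2), (2 - 3*a + a^2), (2 - a), (2 - a)] = ![(2 - a), (6 - 9*a + 3*a^2), (1 - 2*a + a^2), (2 - 3*a + a^2), 0, (-2*a + a^2), (-2 + a)] := by
    rw [hx]; funext i
    fin_cases i <;> simp [Matrix.mulVec, dotProduct, Fin.sum_univ_seven] <;> ring
  have s23 : y *ᵥ ![(2 - a), (6 - 9*a + 3*a^2), (1 - 2*a + a^2), (2 - 3*a + a^2), 0, (-2*a + a^2), (-2 + a)] = ![(3 - 4*a + a^2), (-1 + 2*a - a^2), (5 - 7*a + 2*a^2), 0, (2 - 3*a + a^2), (2 - a), (2 - 3*a + a^2)] := by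
    rw [hy]; funext i
    fin_cases i <;> simp [Matrix.mulVec, dotProduct, Fin.sum_univ_seven] <;> ring
  have s24 : x *ᵥ ![(3 - 4*a + a^2), (-1 + 2*a - a^2), (5 - 7*a + 2*a^2), 0, (2 - 3*a + a^2), (2 - a), (2 - 3*a + a^2)] = ![(-1 + 4*a - 4*a^2 + a^3), (3 - 2*a - 2*a^2 + a^3), 0, (5 - 7*a + 2*a^2), (2*a - a^2), 0, (-2 + 3*a - a^2)] := by
    rw [hx]; funext i
    fin_cases i <;> simp [Matrix.mulVec, dotProduct, Fin.sum_univ_seven] <;> ring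
  have s25 : y *ᵥ ![(-1 + 4*a - 4*a^2 + a^3), (3 - 2*a - 2*a^2 + a^3), 0, (5 - 7*a + 2*a^2), (2*a - a^2), 0, (-2 + 3*a - a^2)] = ![(1 - 5*a + 4*a^2 - a^3), 0, (3 - 2*a - 2*a^2 + a^3), (-2*a + a^2), (5 - 9*a + 3*a^2), (2 - 3*a + a^2), (2 - 3*a + a^2)] := by
    rw [hy]; funext i
    fin_cases i <;> simp [Matrix.mulVec, dotProduct, Fin.sum_univ_seven] <;> ring
  have s26 : y *ᵥ ![(1 - 5*a + 4*a^2 - a^3), 0, (3 - 2*a - 2*a^2 + a^3), (-2*a + a^2), (5 - 9*a + 3*a^2), (2 - 3*a + a^2), (2 - 3*a + a^2)] = ![(-9 + 13*a - 4*a^2), (-3 + 2*a + 2*a^2 - a^3), (-3 + 2*a + 2*a^2 - a^3), (-5 + 9*a - 3*a^2), (-5 + 7*a - 2*a^2), (-2 + 3*a - a^2), 0] := by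
    rw [hy]; funext i
    fin_cases i <;> simp [Matrix.mulVec, dotProduct, Fin.sum_univ_seven] <;> ring
  have s27 : x *ᵥ ![(-9 + 13*a - 4*a^2), (-3 + 2*a + 2*a^2 - a^3), (-3 + 2*a + 2*a^2 - a^3), (-5 + 9*a - 3*a^2), (-5 + 7*a - 2*a^2), (-2 + 3*a - a^2), 0] = ![(-3 + 2*a + 2*a^2 - a^3), (-9 + 13*a - 4*a^2), (-5 + 9*a - 3*a^2), (-3 + 2*a + 2*a^2 - a^3), (-2 + 3*a - a^2), (-5 + 7*a - 2*a^2), 0] := by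
    rw [hx]; funext i
    fin_cases i <;> simp [Matrix.mulVec, dotProduct, Fin.sum_univ_seven] <;> ring
  have s28 : y *ᵥ ![(-3 + 2*a + 2*a^2 - a^3), (-9 + 13*a - 4*a^2), (-5 + 9*a - 3*a^2), (-3 + 2*a + 2*a^2 - a^3), (-2 + 3*a - a^2), (-5 + 7*a - 2*a^2), 0] = ![(4 - 10*a + 6*a^2 - a^3), (5 - 9*a + 3*a^2), (-4 + 4*a - a^2), (2 - 3*a + a^2), (-1 - a + 3*a^2 - a^3), 0, (-5 + 7*a - 2*a^2)] := by
    rw [hy]; funext i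
    fin_cases i <;> simp [Matrix.mulVec, dotProduct, Fin.sum_univ_seven] <;> ring
  have s29 : x *ᵥ ![(4 - 10*a + 6*a^2 - a^3), (5 - 9*a + 3*a^2), (-4 + 4*a - a^2), (2 - 3*a + a^2), (-1 - a + 3*a^2 - a^3), 0, (-5 + 7*a - 2*a^2)] = ![(5 - 14*a + 10*a^2 - 2*a^3), (4 - 15*a + 13*a^2 - 3*a^3), (2 - 3*a + a^2), (-4 + 4*a - a^2), (5 - 7*a + 2*a^2), (4 - 8*a + 5*a^2 - a^3), (5 - 7*a + 2*a^2)] := by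
    rw [hx]; funext i
    fin_cases i <;> simp [Matrix.mulVec, dotProduct, Fin.sum_univ_seven] <;> ring
  have s30 : y *ᵥ ![(5 - 14*a + 10*a^2 - 2*a^3), (4 - 15*a + 13*a^2 - 3*a^3), (2 - 3*a + a^2), (-4 + 4*a - a^2), (5 - 7*a + 2*a^2), (4 - 8*a + 5*a^2 - a^3), (5 - 7*a + 2*a^2)] = ![(-7 + 13*a - 9*a^2 + 2*a^3), (-2 + 3*a - a^2), (2 - 12*a + 12*a^2 - 3*a^3), (-5 + 7*a - 2*a^2), (-9 + 11*a - 3*a^2), (-5 + 7*a - 2*a^2), (-1 - a + 3*a^2 - a^3)] := by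
    rw [hy]; funext i
    fin_cases i <;> simp [Matrix.mulVec, dotProduct, Fin.sum_univ_seven] <;> ring
  have s31 : y *ᵥ ![(-7 + 13*a - 9*a^2 + 2*a^3), (-2 + 3*a - a^2), (2 - 12*a + 12*a^2 - 3*a^3), (-5 + 7*a - 2*a^2), (-9 + 11*a - 3*a^2), (-5 + 7*a - 2*a^2), (-1 - a + 3*a^2 - a^3)] = ![(1 + 13*a - 23*a^2 + 12*a^3 - 2*a^4), (-2 + 12*a - 12*a^2 + 3*a^3), (-4 + 15*a - 13*a^2 + 3*a^3), (9 - 11*a + 3*a^2), (4 - 4*a + a^2), (1 + a - 3*a^2 + a^3), (-4 + 8*a - 5*a^2 + a^3)] := by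
    rw [hy]; funext i
    fin_cases i <;> simp [Matrix.mulVec, dotProduct, Fin.sum_univ_seven] <;> ring
  have s32 : x *ᵥ ![(1 + 13*a - 23*a^2 + 12*a^3 - 2*a^4), (-2 + 12*a - 12*a^2 + 3*a^3), (-4 + 15*a - 13*a^2 + 3*a^3), (9 - 11*a + 3*a^2), (4 - 4*a + a^2), (1 + a - 3*a^2 + a^3), (-4 + 8*a - 5*a^2 + a^3)] = ![(-2 + 8*a - 4*a^2 - 2*a^3 + a^4), (1 + 9*a - 15*a^2 + 7*a^3 - a^4), (9 - 11*a + 3*a^2), (-4 + 15*a - 13*a^2 + 3*a^3), (5 - 7*a + 2*a^2), (8 - 12*a + 6*a^2 - a^3), (4 - 8*a + 5*a^2 - a^3)] := by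
    rw [hx]; funext i
    fin_cases i <;> simp [Matrix.mulVec, dotProduct, Fin.sum_univ_seven] <;> ring
  have s33 : y *ᵥ ![(-2 + 8*a - 4*a^2 - 2*a^3 + a^4), (1 + 9*a - 15*a^2 + 7*a^3 - a^4), (9 - 11*a + 3*a^2), (-4 + 15*a - 13*a^2 + 3*a^3), (5 - 7*a + 2*a^2), (8 - 12*a + 6*a^2 - a^3), (4 - 8*a + 5*a^2 - a^3)] = ![(-20 + 42*a - 30*a^2 + 9*a^3 - a^4), (-9 + 11*a - 3*a^2), (-8 + 20*a - 18*a^2 + 7*a^3 - a^4), (-5 + 7*a - 2*a^2), (-9 + 22*a - 15*a^2 + 3*a^3), (-4 + 8*a - 5*a^2 + a^3), (4 - 4*a + a^2)] := by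
    rw [hy]; funext i
    fin_cases i <;> simp [Matrix.mulVec, dotProduct, Fin.sum_univ_seven] <;> ring
  have s34 : x *ᵥ ![(-20 + 42*a - 30*a^2 + 9*a^3 - a^4), (-9 + 11*a - 3*a^2), (-8 + 20*a - 18*a^2 + 7*a^3 - a^4), (-5 + 7*a - 2*a^2), (-9 + 22*a - 15*a^2 + 3*a^3), (-4 + 8*a - 5*a^2 + a^3), (4 - 4*a + a^2)] = ![(-9 + 15*a - 7*a^2 + a^3), (-20 + 46*a - 34*a^2 + 10*a^3 - a^4), (-5 + 7*a - 2*a^2), (-8 + 20*a - 18*a^2 + 7*a^3 - a^4), (-8 + 12*a - 6*a^2 + a^3), (-13 + 26*a - 16*a^2 + 3*a^3), (-4 + 4*a - a^2)] := by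
    rw [hx]; funext i
    fin_cases i <;> simp [Matrix.mulVec, dotProduct, Fin.sum_univ_seven] <;> ring
  intro h
  have hv : ((x * y * x⁻¹ * y⁻¹) ^ 7) *ᵥ ![0,0,0,0,1,0,0] = ![0,0,0,0,1,0,0] := by
    rw [h, Matrix.one_mulVec]
  rw [hxinv, hyinv] at hv
  rw [pow_succ, pow_succ, pow_succ, pow_succ, pow_succ, pow_succ, pow_one] at hv
  simp only [Matrix.mul_assoc, ← Matrix.mulVec_mulVec] at hv
  rw [s0, s1, s2, s3, s4, s5, s6, s7, s8, s9, s10, s11, s12, s13, s14, s15, s16, s17, s18, s19, s20, s21, s22, s23, s24, s25, s26, s27, s28, s29, s30, s31, s32, s33, s34] at hv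
  have h6 := congrFun hv 6
  simp at h6
  have hsq : (a - 2) ^ 2 = 0 := by linear_combination -h6
  have hz : a - 2 = 0 := pow_eq_zero_iff (two_ne_zero) |>.mp hsq
  exact ha2 (sub_eq_zero.mp hz)
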